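/- With the 3-SAT construction of π_1, π_2 as described, suppose z_1, z_2 are natural numbers such that π_1^{z_1} π_2^{z_2} is fixpoint-free. Then for every j ∈ [m] there is an a ∈ [3] such that z_2 ≢ 0 mod p̃_{i_a}, where C_j = {x̃_{i_1}, x̃_{i_2}, x̃_{i_3}}. -/

import Mathlib

/-! 3-SAT construction.  Variables are `x_1, …, x_n`, indexed by `Fin n`; the `j`-th clause is
`C_j = {x̃_{idx j 0}, x̃_{idx j 1}, x̃_{idx j 2}}` with `idx j` strictly monotone, where the
literal on variable `idx j a` is negated iff `neg j a = true`.  The first `2n` primes are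
`p_1, …, p_n, p̄_1, …, p̄_n` with `p_i = P (i-1)` and `p̄_i = P (n+i-1)` for the enumeration
`P` of the primes (`P 0 = 2`).  Every `Sym(ℓ)`-component is realized on `Fin ℓ`, and the
`ℓ`-cycle `([ℓ]) = (1,2,…,ℓ)` is realized as `finRotate ℓ`.  Fixpoint-freeness is checked on
the disjoint union of all components. -/

namespace SatConstruction

/-- `P i` is the `(i+1)`-st prime: `P 0 = 2`, `P 1 = 3`, ….  The prime `p_i` associated with
the positive literal `x_i` is `P (i-1)` and the prime `p̄_i` associated with the negative
literal `x̄_i` is `P (n+i-1)` (with `i ∈ [n]` one-indexed). -/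
noncomputable def P (i : ℕ) : ℕ := Nat.nth Nat.Prime i

/-- `p̃` of a literal: the prime of the underlying variable, according to the sign. -/
noncomputable def ptil (n : ℕ) {m : ℕ} (idx : Fin m → Fin 3 → Fin n)
    (neg : Fin m → Fin 3 → Bool) (j : Fin m) (a : Fin 3) : ℕ :=
  if neg j a then P (n + (idx j a).val) else P (idx j a).val

/-- `r_j = p̃_{i_1} p̃_{i_2} p̃_{i_3}` for the clause `C_j`. -/
noncomputable def r (n : ℕ) {m : ℕ} (idx : Fin m → Fin 3 → Fin n)
    (neg : Fin m → Fin 3 → Bool) (j : Fin m) : ℕ :=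
  ptil n idx neg j 0 * ptil n idx neg j 1 * ptil n idx neg j 2

/-- The underlying set of the group
`G = ∏_{i=1}^n (Sym(p_i) × Sym(p̄_i) × Sym(p_i p̄_i)^{(p_i-1)(p̄_i-1)+1}) × ∏_{j=1}^m Sym(r_j)`
(embedded in a symmetric group).  The `(p_i-1)(p̄_i-1)+1` copies of `Sym(p_i p̄_i)` are
indexed by `Option (Fin (p_i - 1) × Fin (p̄_i - 1))`: `none` is the component of `α_{i,3}`
and `some (l-1, k-1)` is the component of `α_{i,l,k}`. -/
abbrev Omega (n : ℕ) {m : ℕ} (idx : Fin m → Fin 3 → Fin n)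
    (neg : Fin m → Fin 3 → Bool) : Type :=
  (Σ i : Fin n,
      (Fin (P i.val) ⊕ Fin (P (n + i.val))) ⊕
        (Σ _c : Option (Fin (P i.val - 1) × Fin (P (n + i.val) - 1)),
          Fin (P i.val * P (n + i.val)))) ⊕
    (Σ j : Fin m, Fin (r n idx neg j))

/-- `π_1 = (α_1,…,α_n,β_1,…,β_m)` with
`α_i = (α_{i,1}, α_{i,2}, α_{i,3}, α_{i,1,1}, …, α_{i,p_i-1,p̄_i-1})`,
`α_{i,1} = ([p_i])`, `α_{i,2} = ([p̄_i])`, `α_{i,3} = id`,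
`α_{i,l,k} = ([p_i p̄_i])^{s_{i,l,k}}` and `β_j = id`. -/
noncomputable def pi1 (n : ℕ) {m : ℕ} (idx : Fin m → Fin 3 → Fin n)
    (neg : Fin m → Fin 3 → Bool) (s : Fin n → ℕ → ℕ → ℕ) :
    Equiv.Perm (Omega n idx neg) :=
  Equiv.sumCongr
    (Equiv.sigmaCongrRight fun i =>
      Equiv.sumCongr
        (Equiv.sumCongr (finRotate _) (finRotate _))
        (Equiv.sigmaCongrRight fun c =>
          match c with
          | none => Equiv.refl _
          | some (l, k) =>
              finRotate (P i.val * P (n + i.val)) ^ s i (l.val + 1) (k.val + 1)))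
    (Equiv.refl _)

/-- `π_2 = (γ_1,…,γ_n,δ_1,…,δ_m)` with
`γ_i = (γ_{i,1}, γ_{i,2}, γ_{i,3}, γ_{i,1,1}, …, γ_{i,p_i-1,p̄_i-1})`,
`γ_{i,1} = γ_{i,2} = id`, `γ_{i,3} = γ_{i,l,k} = ([p_i p̄_i])` and `δ_j = ([r_j])`. -/
noncomputable def pi2 (n : ℕ) {m : ℕ} (idx : Fin m → Fin 3 → Fin n)
    (neg : Fin m → Fin 3 → Bool) :
    Equiv.Perm (Omega n idx neg) :=
  Equiv.sumCongr
    (Equiv.sigmaCongrRight fun _i =>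
      Equiv.sumCongr (Equiv.refl _) (Equiv.sigmaCongrRight fun _c => finRotate _))
    (Equiv.sigmaCongrRight fun j => finRotate (r n idx neg j))

/-- If `π_1^{z_1} π_2^{z_2}` is fixpoint-free then for every clause
`C_j = {x̃_{i_1}, x̃_{i_2}, x̃_{i_3}}` there is an `a ∈ [3]` with `z_2 ≢ 0 (mod p̃_{i_a})`. -/
theorem exists_not_dvd_z2
    (n m : ℕ) (idx : Fin m → Fin 3 → Fin n) (hidx : ∀ j, StrictMono (idx j))
    (neg : Fin m → Fin 3 → Bool)
    (s : Fin n → ℕ → ℕ → ℕ)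
    -- `s_{i,l,k}` is the unique number in `[0, p_i p̄_i - 1]` with `s_{i,l,k} ≡ l (mod p_i)`
    -- and `s_{i,l,k} ≡ k (mod p̄_i)`, for `l ∈ [p_i - 1]` and `k ∈ [p̄_i - 1]`
    (hs : ∀ i : Fin n, ∀ l k : ℕ, 1 ≤ l → l < P i.val → 1 ≤ k → k < P (n + i.val) →
      s i l k < P i.val * P (n + i.val) ∧
        s i l k % P i.val = l ∧ s i l k % P (n + i.val) = k)
    (z1 z2 : ℕ)
    (hfpf : ∀ a : Omega n idx neg,
      (pi1 n idx neg s ^ z1 * pi2 n idx neg ^ z2) a ≠ a) :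
    ∀ j : Fin m, ∃ a : Fin 3, ¬ ptil n idx neg j a ∣ z2 := by
  intro j
  by_contra h
  push_neg at h
  -- the three primes are pairwise distinct, hence r_j divides z2
  have hP : StrictMono P := Nat.nth_strictMono Nat.infinite_setOf_prime
  have hPprime : ∀ i, (P i).Prime := fun i => Nat.prime_nth_prime i
  have tne : ∀ a b : Fin 3, a ≠ b →
      (if neg j a then n + (idx j a).val else (idx j a).val) ≠
        (if neg j b then n + (idx j b).val else (idx j b).val) := by
    intro a b hab
    have hij : (idx j a).val ≠ (idx j b).val := fun hv =>
      hab ((hidx j).injective (Fin.ext hv))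
    have hia := (idx j a).isLt
    have hib := (idx j b).isLt
    rcases neg j a <;> rcases neg j b <;> simp <;> omega
  have hpt : ∀ a : Fin 3, ptil n idx neg j a =
      P (if neg j a then n + (idx j a).val else (idx j a).val) := by
    intro a; unfold ptil; split <;> rfl
  have hco : ∀ a b : Fin 3, a ≠ b →
      (ptil n idx neg j a).Coprime (ptil n idx neg j b) := by
    intro a b hab
    rw [hpt, hpt, Nat.coprime_primes (hPprime _) (hPprime _)]
    exact fun hpq => tne a b hab (hP.injective hpq)
  have hdvd : r n idx neg j ∣ z2 := by
    have h01 : (0 : Fin 3) ≠ 1 := by decide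
    have h02 : (0 : Fin 3) ≠ 2 := by decide
    have h12 : (1 : Fin 3) ≠ 2 := by decide
    have := ((hco 0 2 h02).mul (hco 1 2 h12)).mul_dvd_of_dvd_of_dvd
      ((hco 0 1 h01).mul_dvd_of_dvd_of_dvd (h 0) (h 1)) (h 2)
    exact this
  -- r_j is positive
  have hptpos : ∀ a : Fin 3, 0 < ptil n idx neg j a := by
    intro a; rw [hpt]; exact (hPprime _).pos
  have hrpos : 0 < r n idx neg j :=
    Nat.mul_pos (Nat.mul_pos (hptpos 0) (hptpos 1)) (hptpos 2)
  -- finRotate to the power z2 is the identity on Fin r_j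
  have hrot : (finRotate (r n idx neg j)) ^ z2 = 1 := by
    obtain ⟨k, hk⟩ := Nat.exists_eq_succ_of_ne_zero hrpos.ne'
    obtain ⟨t, ht⟩ := hdvd
    open Fin.CommRing in
    have hpowapply : ∀ (z : ℕ) (x : Fin (k + 1)),
        ((finRotate (k + 1)) ^ z) x = x + (z : Fin (k + 1)) := by
      intro z
      induction z with
      | zero => intro x; simp
      | succ z ih =>
          intro x
          rw [pow_succ, Equiv.Perm.mul_apply, finRotate_succ_apply, ih]
          push_cast
          ring
    open Fin.CommRing in
    have hone : (finRotate (k + 1)) ^ (k + 1) = 1 := by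
      ext x
      rw [hpowapply]
      simp
    rw [hk] at ht ⊢
    rw [ht, pow_mul, hone, one_pow]
  -- compute the action on the clause component
  have hpi1 : ∀ z : ℕ, ∀ y : (Σ j : Fin m, Fin (r n idx neg j)),
      ((pi1 n idx neg s) ^ z) (Sum.inr y) = Sum.inr y := by
    intro z y
    induction z with
    | zero => rfl
    | succ z ih => rw [pow_succ, Equiv.Perm.mul_apply, show (pi1 n idx neg s)
        (Sum.inr y) = Sum.inr y from rfl, ih]
  have hpi2 : ∀ z : ℕ, ∀ x : Fin (r n idx neg j),
      ((pi2 n idx neg) ^ z) (Sum.inr ⟨j, x⟩) =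
        Sum.inr ⟨j, ((finRotate (r n idx neg j)) ^ z) x⟩ := by
    intro z
    induction z with
    | zero => intro x; rfl
    | succ z ih =>
        intro x
        rw [pow_succ, pow_succ, Equiv.Perm.mul_apply, Equiv.Perm.mul_apply,
          show (pi2 n idx neg) (Sum.inr ⟨j, x⟩) =
            Sum.inr ⟨j, finRotate (r n idx neg j) x⟩ from rfl, ih]
  have hfix := hfpf (Sum.inr ⟨j, ⟨0, hrpos⟩⟩)
  apply hfix
  rw [Equiv.Perm.mul_apply, hpi2, hrot, hpi1]
  rfl

end SatConstruction
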